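/- Let μ0 and μ1 be probability measures on ℝ with μ0 atomless, both having finite second moments. Let F_0 be the cumulative distribution function of μ0 and Q_1 the generalized inverse of the cumulative distribution function of μ1, and set T⋆ = Q_1 ∘ F_0. Then for every measurable map T : ℝ → ℝ whose pushforward of μ0 equals μ1, ∫ (x − T⋆(x))² dμ0(x) ≤ ∫ (x − T(x))² dμ0(x). -/

import Mathlib

set_option linter.unusedSectionVars false
set_option linter.unusedVariables false

open MeasureTheory Set Filter ProbabilityTheory
open scoped Topology ENNReal

noncomputable def otChi (a s : ℝ) : ℝ := if s < a then 1 else 0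

lemma otChi_sub_nonneg {a : ℝ} (ha : 0 ≤ a) :
    (fun s => otChi a s - otChi 0 s) = (Ico 0 a).indicator (fun _ => (1:ℝ)) := by
  funext s
  simp only [otChi, indicator, mem_Ico]
  by_cases h2 : s < 0
  · rw [if_pos (lt_of_lt_of_le h2 ha), if_pos h2,
      if_neg (fun h => absurd h.1 (not_le.mpr h2))]
    ring
  · rw [if_neg h2]
    by_cases h1 : s < a
    · rw [if_pos h1, if_pos ⟨not_lt.mp h2, h1⟩]; ring
    · rw [if_neg h1, if_neg (fun h => h1 h.2)]; ring

lemma otChi_sub_neg {a : ℝ} (ha : a < 0) :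
    (fun s => otChi a s - otChi 0 s) = fun s => -((Ico a 0).indicator (fun _ => (1:ℝ)) s) := by
  funext s
  simp only [otChi, indicator, mem_Ico]
  by_cases h1 : s < a
  · rw [if_pos h1, if_pos (lt_trans h1 ha),
      if_neg (fun h => absurd h1 (not_lt.mpr h.1))]
    ring
  · by_cases h2 : s < 0
    · rw [if_neg h1, if_pos h2, if_pos ⟨not_lt.mp h1, h2⟩]; ring
    · rw [if_neg h1, if_neg h2, if_neg (fun h => h2 h.2)]; ring

lemma otChi_integrable (a : ℝ) : Integrable (fun s => otChi a s - otChi 0 s) volume := by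
  rcases le_or_gt 0 a with ha | ha
  · rw [otChi_sub_nonneg ha]
    rw [integrable_indicator_iff measurableSet_Ico]
    exact (integrableOn_const_iff).mpr (Or.inr (by simp [Real.volume_Ico]))
  · rw [otChi_sub_neg ha]
    apply Integrable.neg
    rw [integrable_indicator_iff measurableSet_Ico]
    exact (integrableOn_const_iff).mpr (Or.inr (by simp [Real.volume_Ico]))

lemma otChi_integral (a : ℝ) : ∫ s, (otChi a s - otChi 0 s) = a := by
  rcases le_or_gt 0 a with ha | ha
  · rw [otChi_sub_nonneg ha, integral_indicator_const (1:ℝ) measurableSet_Ico]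
    simp [Real.volume_Ico, ENNReal.toReal_ofReal ha, ha]
  · rw [otChi_sub_neg ha, integral_neg, integral_indicator_const (1:ℝ) measurableSet_Ico]
    rw [measureReal_def, Real.volume_Ico, ENNReal.toReal_ofReal (by linarith : (0:ℝ) ≤ 0 - a)]
    simp

section CdfLemmas

variable (μ ν : Measure ℝ) [IsProbabilityMeasure μ] [IsProbabilityMeasure ν]

lemma otCdf_continuous [NullSingletonClass μ] : Continuous (cdf μ) := by
  rw [continuous_iff_continuousAt]
  intro x
  rw [(monotone_cdf μ).continuousAt_iff_leftLim_eq_rightLim, StieltjesFunction.rightLim_eq]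
  have h : ENNReal.ofReal (cdf μ x - Function.leftLim (cdf μ) x) = 0 := by
    rw [← (cdf μ).measure_singleton x, measure_cdf]
    exact measure_singleton x
  rw [ENNReal.ofReal_eq_zero] at h
  exact le_antisymm ((monotone_cdf μ).leftLim_le le_rfl) (by linarith)

lemma otCdf_measure_le [NullSingletonClass μ] {u : ℝ} (h0 : 0 ≤ u) (h1 : u < 1) :
    μ {x | cdf μ x ≤ u} = ENNReal.ofReal u := by
  set A := {x | cdf μ x ≤ u} with hA
  rcases eq_empty_or_nonempty A with hAe | hAne
  · have hu0 : u ≤ 0 := by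
      by_contra hc; push_neg at hc
      rcases ((tendsto_cdf_atBot μ).eventually (eventually_lt_nhds hc)).exists with ⟨x, hx⟩
      have : x ∈ A := hx.le
      rw [hAe] at this
      exact this
    have hu : u = 0 := le_antisymm hu0 h0
    simp [hAe, hu]
  · have hbdd : BddAbove A := by
      rcases eventually_atTop.mp
        ((tendsto_cdf_atTop μ).eventually (eventually_gt_nhds h1)) with ⟨b, hb⟩
      refine ⟨b, fun a ha => ?_⟩
      by_contra hc; push_neg at hc
      exact absurd ha (not_le.mpr (hb a hc.le))
    set c := sSup A with hc
    have hIio : Set.Iio c ⊆ A := by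
      intro a ha
      obtain ⟨a', ha', haa'⟩ := exists_lt_of_lt_csSup hAne ha
      exact le_trans (monotone_cdf μ haa'.le) ha'
    have hsub : A ⊆ Set.Iic c := fun a ha => le_csSup hbdd ha
    have hcont := otCdf_continuous μ
    have hseq1 : Filter.Tendsto (fun n : ℕ => c + 1/(n+1)) atTop (𝓝 c) := by
      have h := tendsto_one_div_add_atTop_nhds_zero_nat.const_add c
      simpa using h
    have hseq2 : Filter.Tendsto (fun n : ℕ => c - 1/(n+1)) atTop (𝓝 c) := by
      have h := tendsto_one_div_add_atTop_nhds_zero_nat.const_sub c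
      simpa using h
    have hge : u ≤ cdf μ c := by
      refine ge_of_tendsto' ((hcont.tendsto c).comp hseq1) fun n => ?_
      have hnotA : (c + 1/(n+1)) ∉ A := by
        intro hmem
        have h' := le_csSup hbdd hmem
        have hpos : (0:ℝ) < 1/((n:ℝ)+1) := by positivity
        linarith
      exact (not_le.mp hnotA).le
    have hle : cdf μ c ≤ u := by
      refine le_of_tendsto' ((hcont.tendsto c).comp hseq2) fun n => ?_
      have hpos : (0:ℝ) < 1/((n:ℝ)+1) := by positivity
      exact hIio (by simp only [Set.mem_Iio]; linarith)
    have h1' : μ A = μ (Set.Iic c) := by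
      refine le_antisymm (measure_mono hsub) ?_
      rw [← measure_congr (Iio_ae_eq_Iic (a := c) (μ := μ))]
      exact measure_mono hIio
    rw [h1', ← ofReal_cdf μ c, le_antisymm hle hge]

lemma otCdf_measure_ge_one [NullSingletonClass μ] : μ {x | 1 ≤ cdf μ x} = 0 := by
  set E := {x | 1 ≤ cdf μ x} with hE
  rcases eq_empty_or_nonempty E with hEe | hEne
  · simp [hEe]
  · have hbdd : BddBelow E := by
      rcases eventually_atBot.mp ((tendsto_cdf_atBot μ).eventually
        (eventually_lt_nhds (by norm_num : (0:ℝ) < 1))) with ⟨b, hb⟩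
      refine ⟨b, fun a ha => ?_⟩
      by_contra hc; push_neg at hc
      exact absurd ha (not_le.mpr (hb a hc.le))
    set b := sInf E with hb
    have hx1 : ∀ x, b < x → μ (Set.Ioi x) = 0 := by
      intro x hx
      obtain ⟨e, he, hex⟩ := exists_lt_of_csInf_lt hEne hx
      have h1 : cdf μ x = 1 := le_antisymm (cdf_le_one μ x) (le_trans he (monotone_cdf μ hex.le))
      have h2 : μ (Set.Iic x) = 1 := by
        rw [← ofReal_cdf μ x, h1]; simp
      have h3 := measure_compl (measurableSet_Iic (a := x)) (measure_ne_top μ _)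
      rw [Set.compl_Iic] at h3
      rw [h3, h2, measure_univ]
      simp
    have hIoi : μ (Set.Ioi b) = 0 := by
      have hcover : Set.Ioi b ⊆ ⋃ n : ℕ, Set.Ioi (b + 1/(n+1)) := by
        intro x hx
        obtain ⟨n, hn⟩ := exists_nat_one_div_lt (K := ℝ) (sub_pos.mpr hx)
        exact Set.mem_iUnion.mpr ⟨n, by simp only [Set.mem_Ioi]; linarith⟩
      refine measure_mono_null hcover (measure_iUnion_null fun n => hx1 _ ?_)
      have hpos : (0:ℝ) < 1/((n:ℝ)+1) := by positivity
      linarith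
    have hsub : E ⊆ {b} ∪ Set.Ioi b := by
      intro x hx
      rcases eq_or_lt_of_le (csInf_le hbdd hx) with h | h
      · exact Or.inl (by simp [← h, hb])
      · exact Or.inr h
    exact measure_mono_null hsub (measure_union_null (measure_singleton b) hIoi)

end CdfLemmas

noncomputable def otQ (ν : Measure ℝ) (u : ℝ) : ℝ := sInf {x | u ≤ cdf ν x}

section Quantile

variable (ν : Measure ℝ) [IsProbabilityMeasure ν]

lemma otQ_S_nonempty {u : ℝ} (h1 : u < 1) : {x | u ≤ cdf ν x}.Nonempty := by
  rcases ((tendsto_cdf_atTop ν).eventually (eventually_gt_nhds h1)).exists with ⟨x, hx⟩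
  exact ⟨x, hx.le⟩

lemma otQ_S_bddBelow {u : ℝ} (h0 : 0 < u) : BddBelow {x | u ≤ cdf ν x} := by
  rcases eventually_atBot.mp
    ((tendsto_cdf_atBot ν).eventually (eventually_lt_nhds h0)) with ⟨b, hb⟩
  refine ⟨b, fun x hx => ?_⟩
  by_contra hc; push_neg at hc
  exact absurd hx (not_le.mpr (hb x hc.le))

lemma otQ_le_cdf {u : ℝ} (h0 : 0 < u) (h1 : u < 1) : u ≤ cdf ν (otQ ν u) := by
  have hne := otQ_S_nonempty ν h1
  have htends : ContinuousWithinAt (cdf ν) (Set.Ioi (otQ ν u)) (otQ ν u) :=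
    ((cdf ν).right_continuous (otQ ν u)).mono Set.Ioi_subset_Ici_self
  refine ge_of_tendsto htends (eventually_nhdsWithin_of_forall fun x hx => ?_)
  obtain ⟨e, he, hex⟩ := exists_lt_of_csInf_lt hne hx
  exact le_trans he (monotone_cdf ν hex.le)

lemma otQ_le_iff {u : ℝ} (h0 : 0 < u) (h1 : u < 1) (x : ℝ) :
    otQ ν u ≤ x ↔ u ≤ cdf ν x :=
  ⟨fun h => le_trans (otQ_le_cdf ν h0 h1) (monotone_cdf ν h),
   fun h => csInf_le (otQ_S_bddBelow ν h0) h⟩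

lemma otQ_mono {u v : ℝ} (h0 : 0 < u) (hu : u ≤ v) (h1 : v < 1) : otQ ν u ≤ otQ ν v := by
  rw [otQ_le_iff ν h0 (lt_of_le_of_lt hu h1)]
  exact le_trans hu (otQ_le_cdf ν (lt_of_lt_of_le h0 hu) h1)

lemma otQ_zero_of_nonpos {u : ℝ} (hu : u ≤ 0) : otQ ν u = 0 := by
  have h : {x | u ≤ cdf ν x} = Set.univ :=
    Set.eq_univ_of_forall fun x => le_trans hu (cdf_nonneg ν x)
  rw [otQ, h]
  exact Real.sInf_of_not_bddBelow not_bddBelow_univ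

lemma otQ_zero_of_one_lt {u : ℝ} (hu : 1 < u) : otQ ν u = 0 := by
  have h : {x | u ≤ cdf ν x} = ∅ := by
    ext x
    simp only [Set.mem_setOf_eq, Set.mem_empty_iff_false, iff_false, not_le]
    exact lt_of_le_of_lt (cdf_le_one ν x) hu
  rw [otQ, h]
  exact Real.sInf_empty

lemma otQ_measurable : Measurable (otQ ν) := by
  apply measurable_of_Iic
  intro a
  have hset : otQ ν ⁻¹' (Set.Iic a) =
      (Set.Ioo (0:ℝ) 1 ∩ Set.Iic (cdf ν a)) ∪
      ((Set.Iic (0:ℝ) ∪ Set.Ioi 1) ∩ {_u : ℝ | (0:ℝ) ≤ a}) ∪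
      {u : ℝ | u = 1 ∧ otQ ν 1 ≤ a} := by
    ext u
    simp only [Set.mem_preimage, Set.mem_Iic, Set.mem_union, Set.mem_inter_iff, Set.mem_Ioo,
      Set.mem_Ioi, Set.mem_setOf_eq]
    constructor
    · intro h
      rcases lt_trichotomy u 1 with hu1 | hu1 | hu1
      · rcases le_or_gt u 0 with hu0 | hu0
        · exact Or.inl (Or.inr ⟨Or.inl hu0, by rwa [otQ_zero_of_nonpos ν hu0] at h⟩)
        · exact Or.inl (Or.inl ⟨⟨hu0, hu1⟩, (otQ_le_iff ν hu0 hu1 a).mp h⟩)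
      · exact Or.inr ⟨hu1, hu1 ▸ h⟩
      · exact Or.inl (Or.inr ⟨Or.inr hu1, by rwa [otQ_zero_of_one_lt ν hu1] at h⟩)
    · intro h
      rcases h with (⟨⟨hu0, hu1⟩, hle⟩ | ⟨hu, ha⟩) | ⟨hu1, hq⟩
      · exact (otQ_le_iff ν hu0 hu1 a).mpr hle
      · rcases hu with hu0 | hu1
        · rwa [otQ_zero_of_nonpos ν hu0]
        · rwa [otQ_zero_of_one_lt ν hu1]
      · rw [hu1]; exact hq
  rw [hset]
  refine MeasurableSet.union (MeasurableSet.union ?_ ?_) ?_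
  · exact measurableSet_Ioo.inter measurableSet_Iic
  · refine (measurableSet_Iic.union measurableSet_Ioi).inter ?_
    by_cases h : (0:ℝ) ≤ a
    · simp only [h, Set.setOf_true]; exact MeasurableSet.univ
    · simp only [h, Set.setOf_false]; exact MeasurableSet.empty
  · by_cases h : otQ ν 1 ≤ a
    · have he : {u : ℝ | u = 1 ∧ otQ ν 1 ≤ a} = {1} := by ext u; simp [h]
      rw [he]; exact measurableSet_singleton 1
    · have he : {u : ℝ | u = 1 ∧ otQ ν 1 ≤ a} = ∅ := by ext u; simp [h]
      rw [he]; exact MeasurableSet.empty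

end Quantile

section Pushforward

variable (μ ν : Measure ℝ) [IsProbabilityMeasure μ] [IsProbabilityMeasure ν] [NullSingletonClass μ]

lemma otD_compl_null :
    μ ({x | 0 < cdf μ x ∧ cdf μ x < 1}ᶜ) = 0 := by
  have hsub : {x | 0 < cdf μ x ∧ cdf μ x < 1}ᶜ ⊆ {x | cdf μ x ≤ 0} ∪ {x | 1 ≤ cdf μ x} := by
    intro x hx
    simp only [Set.mem_compl_iff, Set.mem_setOf_eq, not_and_or, not_lt] at hx
    exact hx
  refine measure_mono_null hsub (measure_union_null ?_ (otCdf_measure_ge_one μ))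
  simpa using otCdf_measure_le μ le_rfl one_pos

lemma otQ_cdf_map : Measure.map (fun x => otQ ν (cdf μ x)) μ = ν := by
  have hmeas : Measurable fun x => otQ ν (cdf μ x) :=
    (otQ_measurable ν).comp (monotone_cdf μ).measurable
  refine Measure.ext_of_Iic _ ν fun y => ?_
  rw [Measure.map_apply hmeas measurableSet_Iic]
  have hae : (fun x => otQ ν (cdf μ x)) ⁻¹' (Set.Iic y) =ᵐ[μ] {x | cdf μ x ≤ cdf ν y} := by
    rw [ae_eq_set]
    constructor
    · refine measure_mono_null (fun x hx => ?_) (otD_compl_null μ)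
      obtain ⟨h1, h2⟩ := hx
      simp only [Set.mem_preimage, Set.mem_Iic] at h1
      simp only [Set.mem_setOf_eq] at h2
      simp only [Set.mem_compl_iff, Set.mem_setOf_eq, not_and_or, not_lt]
      by_contra hc
      push_neg at hc
      obtain ⟨hc0, hc1⟩ := hc
      exact h2 ((otQ_le_iff ν (lt_of_not_ge (by intro h; exact absurd h (not_le.mpr hc0)))
        hc1 y).mp h1)
    · refine measure_mono_null (fun x hx => ?_) (otD_compl_null μ)
      obtain ⟨h1, h2⟩ := hx
      simp only [Set.mem_setOf_eq] at h1
      simp only [Set.mem_preimage, Set.mem_Iic] at h2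
      simp only [Set.mem_compl_iff, Set.mem_setOf_eq, not_and_or, not_lt]
      by_contra hc
      push_neg at hc
      obtain ⟨hc0, hc1⟩ := hc
      exact h2 ((otQ_le_iff ν hc0 hc1 y).mpr h1)
  rw [measure_congr hae]
  by_cases hy : cdf ν y < 1
  · rw [otCdf_measure_le μ (cdf_nonneg ν y) hy, ofReal_cdf]
  · have h1 : cdf ν y = 1 := le_antisymm (cdf_le_one ν y) (not_lt.mp hy)
    have huniv : {x | cdf μ x ≤ cdf ν y} = Set.univ :=
      Set.eq_univ_of_forall fun x => h1 ▸ cdf_le_one μ x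
    have h2 : ν (Set.Iic y) = 1 := by rw [← ofReal_cdf ν y, h1]; simp
    rw [huniv, h2, measure_univ]

lemma otTstar_min (s t : ℝ) :
    μ (Set.Ioi s ∩ (fun x => otQ ν (cdf μ x)) ⁻¹' Set.Ioi t) =
      min (μ (Set.Ioi s)) (μ ((fun x => otQ ν (cdf μ x)) ⁻¹' Set.Ioi t)) := by
  set D := {x | 0 < cdf μ x ∧ cdf μ x < 1} with hD
  set U := Set.Ioi s with hU
  set V := (fun x => otQ ν (cdf μ x)) ⁻¹' Set.Ioi t with hV
  have hmono : ∀ x ∈ D, ∀ y ∈ D, x ≤ y → otQ ν (cdf μ x) ≤ otQ ν (cdf μ y) := by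
    intro x hx y hy hxy
    exact otQ_mono ν hx.1 (monotone_cdf μ hxy) hy.2
  have hmeasD : ∀ (W : Set ℝ), μ (W ∩ D) = μ W := fun W =>
    measure_inter_conull (otD_compl_null μ)
  have hnested : (U ∩ D ⊆ V ∩ D) ∨ (V ∩ D ⊆ U ∩ D) := by
    by_cases hUV : U ∩ D ⊆ V
    · exact Or.inl fun x hx => ⟨hUV hx, hx.2⟩
    · right
      rw [Set.not_subset] at hUV
      obtain ⟨a, ⟨haU, haD⟩, haV⟩ := hUV
      rintro x ⟨hxV, hxD⟩
      refine ⟨?_, hxD⟩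
      by_contra hxU
      have hxa : x ≤ a := by
        simp only [hU, Set.mem_Ioi] at haU hxU ⊢
        push_neg at hxU
        linarith [haU]
      have := hmono x hxD a haD hxa
      simp only [hV, Set.mem_preimage, Set.mem_Ioi] at hxV haV
      exact haV (lt_of_lt_of_le hxV this)
  rcases hnested with h | h
  · have e1 : U ∩ V ∩ D = U ∩ D := by
      apply Set.Subset.antisymm
      · exact fun x hx => ⟨hx.1.1, hx.2⟩
      · exact fun x hx => ⟨⟨hx.1, (h hx).1⟩, hx.2⟩
    have e2 : μ (U ∩ V) = μ U := by
      rw [← hmeasD (U ∩ V), e1, hmeasD]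
    have e3 : μ U ≤ μ V := by
      rw [← hmeasD U, ← hmeasD V]
      exact measure_mono h
    rw [e2, min_eq_left e3]
  · have e1 : U ∩ V ∩ D = V ∩ D := by
      apply Set.Subset.antisymm
      · exact fun x hx => ⟨hx.1.2, hx.2⟩
      · exact fun x hx => ⟨⟨(h hx).1, hx.1⟩, hx.2⟩
    have e2 : μ (U ∩ V) = μ V := by
      rw [← hmeasD (U ∩ V), e1, hmeasD]
    have e3 : μ V ≤ μ U := by
      rw [← hmeasD U, ← hmeasD V]
      exact measure_mono h
    rw [e2, min_eq_right e3]

end Pushforward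

lemma otChi_integral_abs (a : ℝ) : ∫ s, |otChi a s - otChi 0 s| = |a| := by
  rcases le_or_gt 0 a with ha | ha
  · have h : (fun s => |otChi a s - otChi 0 s|) = (Set.Ico 0 a).indicator (fun _ => (1:ℝ)) := by
      funext s
      rw [congrFun (otChi_sub_nonneg ha) s]
      exact abs_of_nonneg (Set.indicator_nonneg (fun _ _ => by norm_num) s)
    rw [h, integral_indicator_const (1:ℝ) measurableSet_Ico]
    simp [Real.volume_Ico, ENNReal.toReal_ofReal ha, abs_of_nonneg ha, ha]
  · have h : (fun s => |otChi a s - otChi 0 s|) = (Set.Ico a 0).indicator (fun _ => (1:ℝ)) := by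
      funext s
      rw [congrFun (otChi_sub_neg ha) s, abs_neg]
      exact abs_of_nonneg (Set.indicator_nonneg (fun _ _ => by norm_num) s)
    rw [h, integral_indicator_const (1:ℝ) measurableSet_Ico]
    rw [measureReal_def, Real.volume_Ico, ENNReal.toReal_ofReal (by linarith : (0:ℝ) ≤ 0 - a), abs_of_neg ha]
    simp

noncomputable def otK (μ : Measure ℝ) (R : ℝ → ℝ) (p : ℝ × ℝ) : ℝ :=
  ∫ x, (otChi x p.1 - otChi 0 p.1) * (otChi (R x) p.2 - otChi 0 p.2) ∂μ

section Fubini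

variable (μ : Measure ℝ) [IsProbabilityMeasure μ]

lemma otFubini (R : ℝ → ℝ) (hR : Measurable R)
    (hμ2 : Integrable (fun x => x^2) μ) (hR2 : Integrable (fun x => (R x)^2) μ) :
    Integrable (otK μ R) ((volume : Measure ℝ).prod (volume : Measure ℝ)) ∧
      ∫ x, x * R x ∂μ = ∫ p, otK μ R p ∂((volume : Measure ℝ).prod (volume : Measure ℝ)) := by
  set π := (volume : Measure ℝ).prod (volume : Measure ℝ) with hπ
  set G : ℝ → ℝ × ℝ → ℝ := fun x p =>
    (otChi x p.1 - otChi 0 p.1) * (otChi (R x) p.2 - otChi 0 p.2) with hG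
  have hGmeas : Measurable (Function.uncurry G) := by
    show Measurable fun q : ℝ × (ℝ × ℝ) =>
      ((if q.2.1 < q.1 then (1:ℝ) else 0) - (if q.2.1 < (0:ℝ) then (1:ℝ) else 0)) *
      ((if q.2.2 < R q.1 then (1:ℝ) else 0) - (if q.2.2 < (0:ℝ) then (1:ℝ) else 0))
    have h1 : Measurable fun q : ℝ × (ℝ × ℝ) => if q.2.1 < q.1 then (1:ℝ) else 0 :=
      Measurable.ite (measurableSet_lt (measurable_fst.comp measurable_snd) measurable_fst)
        measurable_const measurable_const
    have h2 : Measurable fun q : ℝ × (ℝ × ℝ) => if q.2.1 < (0:ℝ) then (1:ℝ) else 0 :=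
      Measurable.ite (measurableSet_lt (measurable_fst.comp measurable_snd) measurable_const)
        measurable_const measurable_const
    have h3 : Measurable fun q : ℝ × (ℝ × ℝ) => if q.2.2 < R q.1 then (1:ℝ) else 0 :=
      Measurable.ite (measurableSet_lt (measurable_snd.comp measurable_snd)
        (hR.comp measurable_fst)) measurable_const measurable_const
    have h4 : Measurable fun q : ℝ × (ℝ × ℝ) => if q.2.2 < (0:ℝ) then (1:ℝ) else 0 :=
      Measurable.ite (measurableSet_lt (measurable_snd.comp measurable_snd) measurable_const)
        measurable_const measurable_const
    exact ((h1.sub h2).mul (h3.sub h4))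
  have hGint_x : ∀ x : ℝ, Integrable (G x) π :=
    fun x => (otChi_integrable x).mul_prod (otChi_integrable (R x))
  have hGval : ∀ x : ℝ, ∫ p, G x p ∂π = x * R x := by
    intro x
    have h2 := integral_prod_mul (μ := (volume : Measure ℝ)) (ν := (volume : Measure ℝ))
      (fun s => otChi x s - otChi 0 s) (fun t => otChi (R x) t - otChi 0 t)
    rw [otChi_integral, otChi_integral] at h2
    exact h2
  have hGnorm : ∀ x : ℝ, ∫ p, ‖G x p‖ ∂π = |x| * |R x| := by
    intro x
    have h : (fun p : ℝ × ℝ => ‖G x p‖) = fun p : ℝ × ℝ =>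
        (fun s => |otChi x s - otChi 0 s|) p.1 * (fun t => |otChi (R x) t - otChi 0 t|) p.2 := by
      funext p
      simp [hG, Real.norm_eq_abs, abs_mul]
    have h2 := integral_prod_mul (μ := (volume : Measure ℝ)) (ν := (volume : Measure ℝ))
      (fun s => |otChi x s - otChi 0 s|) (fun t => |otChi (R x) t - otChi 0 t|)
    rw [otChi_integral_abs, otChi_integral_abs] at h2
    rw [h]
    exact h2
  have habs_int : Integrable (fun x => |x| * |R x|) μ := by
    refine Integrable.mono (hμ2.add hR2) ((measurable_id.abs.mul hR.abs).aestronglyMeasurable)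
      (ae_of_all _ fun x => ?_)
    simp only [Real.norm_eq_abs, abs_mul, abs_abs, id, Pi.add_apply]
    rw [abs_of_nonneg (by positivity : (0:ℝ) ≤ x^2 + (R x)^2)]
    nlinarith [sq_abs x, sq_abs (R x), two_mul_le_add_sq |x| |R x|, abs_nonneg x, abs_nonneg (R x)]
  have hGint : Integrable (Function.uncurry G) (μ.prod π) := by
    refine (integrable_prod_iff hGmeas.aestronglyMeasurable).mpr ⟨ae_of_all _ hGint_x, ?_⟩
    simp only [Function.uncurry_apply_pair]
    simp only [hGnorm]
    exact habs_int
  constructor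
  · exact hGint.swap.integral_prod_left
  · calc ∫ x, x * R x ∂μ = ∫ x, ∫ p, G x p ∂π ∂μ := by simp only [hGval]
      _ = ∫ p, ∫ x, G x p ∂μ ∂π := integral_integral_swap hGint
      _ = ∫ p, otK μ R p ∂π := rfl

end Fubini

section KEval

variable (μ : Measure ℝ) [IsProbabilityMeasure μ]

lemma otK_eval (R : ℝ → ℝ) (hR : Measurable R) (p : ℝ × ℝ) :
    otK μ R p = (μ (Set.Ioi p.1 ∩ R ⁻¹' Set.Ioi p.2)).toReal
      - otChi 0 p.2 * (μ (Set.Ioi p.1)).toReal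
      - otChi 0 p.1 * (μ (R ⁻¹' Set.Ioi p.2)).toReal
      + otChi 0 p.1 * otChi 0 p.2 := by
  obtain ⟨s, t⟩ := p
  simp only
  have ea : (fun x => otChi x s) = (Set.Ioi s).indicator (fun _ => (1:ℝ)) := by
    funext x
    simp [otChi, Set.indicator, Set.mem_Ioi]
  have eb : (fun x => otChi (R x) t) = (R ⁻¹' Set.Ioi t).indicator (fun _ => (1:ℝ)) := by
    funext x
    simp [otChi, Set.indicator, Set.mem_Ioi]
  have eab : (fun x => otChi x s * otChi (R x) t) =
      (Set.Ioi s ∩ R ⁻¹' Set.Ioi t).indicator (fun _ => (1:ℝ)) := by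
    funext x
    by_cases h1 : s < x <;> by_cases h2 : t < R x <;>
      simp [otChi, Set.indicator, Set.mem_Ioi, h1, h2]
  have ia : Integrable (fun x => otChi x s) μ := by
    rw [ea]; exact (integrable_const (1:ℝ)).indicator measurableSet_Ioi
  have ib : Integrable (fun x => otChi (R x) t) μ := by
    rw [eb]; exact (integrable_const (1:ℝ)).indicator (hR measurableSet_Ioi)
  have iab : Integrable (fun x => otChi x s * otChi (R x) t) μ := by
    rw [eab]
    exact (integrable_const (1:ℝ)).indicator (measurableSet_Ioi.inter (hR measurableSet_Ioi))
  have hexp : otK μ R (s, t) = ∫ x, (otChi x s * otChi (R x) t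
      - otChi 0 t * otChi x s - otChi 0 s * otChi (R x) t + otChi 0 s * otChi 0 t) ∂μ := by
    unfold otK
    congr 1
    funext x
    simp only
    ring
  have i2 : Integrable (fun x => otChi 0 t * otChi x s) μ := ia.const_mul _
  have i3 : Integrable (fun x => otChi 0 s * otChi (R x) t) μ := ib.const_mul _
  have i12 : Integrable (fun x => otChi x s * otChi (R x) t - otChi 0 t * otChi x s) μ :=
    iab.sub i2
  have i123 : Integrable (fun x => otChi x s * otChi (R x) t - otChi 0 t * otChi x s
      - otChi 0 s * otChi (R x) t) μ := i12.sub i3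
  rw [hexp]
  rw [integral_add i123 (integrable_const _), integral_sub i12 i3,
    integral_sub iab i2, integral_const, integral_const_mul, integral_const_mul,
    eab, ea, eb, integral_indicator_const (1:ℝ) (measurableSet_Ioi.inter (hR measurableSet_Ioi)),
    integral_indicator_const (1:ℝ) measurableSet_Ioi,
    integral_indicator_const (1:ℝ) (hR measurableSet_Ioi)]
  simp [measure_univ, measureReal_def]

end KEval

lemma ot_mul_integrable (μ : Measure ℝ) [IsProbabilityMeasure μ] (R : ℝ → ℝ) (hR : Measurable R)
    (hμ2 : Integrable (fun x => x^2) μ) (hR2 : Integrable (fun x => (R x)^2) μ) :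
    Integrable (fun x => x * R x) μ := by
  refine Integrable.mono (hμ2.add hR2) ((measurable_id.mul hR).aestronglyMeasurable)
    (ae_of_all _ fun x => ?_)
  simp only [Real.norm_eq_abs, abs_mul, id, Pi.add_apply]
  rw [abs_of_nonneg (by positivity : (0:ℝ) ≤ x^2 + (R x)^2)]
  nlinarith [sq_abs x, sq_abs (R x), two_mul_le_add_sq |x| |R x|, abs_nonneg x, abs_nonneg (R x)]

/-- Univariate Monge optimality of the monotone rearrangement for quadratic cost:
if `μ0` is atomless, both `μ0` and `μ1` have finite second moments, and `T` is any
measurable map pushing `μ0` to `μ1`, then the monotone map `T⋆ = Q1 ∘ F0` has transport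
cost no larger than that of `T`. -/
theorem stmt_5 (μ0 μ1 : Measure ℝ) [IsProbabilityMeasure μ0] [IsProbabilityMeasure μ1]
    [NullSingletonClass μ0]
    (hμ0 : Integrable (fun x => x ^ 2) μ0) (hμ1 : Integrable (fun x => x ^ 2) μ1)
    (F0 F1 : ℝ → ℝ)
    (hF0 : ∀ x, F0 x = (μ0 (Iic x)).toReal)
    (hF1 : ∀ x, F1 x = (μ1 (Iic x)).toReal)
    (Q1 : ℝ → ℝ) (hQ1 : ∀ u, Q1 u = sInf {x : ℝ | u ≤ F1 x})
    (Tstar : ℝ → ℝ) (hTstar : ∀ x, Tstar x = Q1 (F0 x)) :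
    ∀ T : ℝ → ℝ, Measurable T → Measure.map T μ0 = μ1 →
      ∫ x, (x - Tstar x) ^ 2 ∂μ0 ≤ ∫ x, (x - T x) ^ 2 ∂μ0 := by
  intro T hT hTmap
  have hF0c : ∀ x, F0 x = cdf μ0 x := fun x => by rw [hF0 x, cdf_eq_real, measureReal_def]
  have hF1c : ∀ x, F1 x = cdf μ1 x := fun x => by rw [hF1 x, cdf_eq_real, measureReal_def]
  have hQc : ∀ u, Q1 u = otQ μ1 u := by
    intro u
    rw [hQ1 u, otQ]
    congr 1
    ext x
    simp only [Set.mem_setOf_eq, hF1c x]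
  have hTsFun : Tstar = fun x => otQ μ1 (cdf μ0 x) := by
    funext x
    rw [hTstar x, hQc, hF0c x]
  have hTsMeas : Measurable Tstar := by
    rw [hTsFun]
    exact (otQ_measurable μ1).comp (monotone_cdf μ0).measurable
  have hTsMap : Measure.map Tstar μ0 = μ1 := by
    rw [hTsFun]
    exact otQ_cdf_map μ0 μ1
  -- second moments
  have hsq_meas : AEStronglyMeasurable (fun y : ℝ => y ^ 2) μ1 :=
    (measurable_id.pow_const 2).aestronglyMeasurable
  have hT2 : Integrable (fun x => (T x)^2) μ0 := by
    have h := hμ1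
    rw [← hTmap] at h
    have := (integrable_map_measure (by rw [hTmap]; exact hsq_meas) hT.aemeasurable).mp h
    simpa [Function.comp_def] using this
  have hTs2 : Integrable (fun x => (Tstar x)^2) μ0 := by
    have h := hμ1
    rw [← hTsMap] at h
    have := (integrable_map_measure (by rw [hTsMap]; exact hsq_meas) hTsMeas.aemeasurable).mp h
    simpa [Function.comp_def] using this
  have hT2eq : ∫ x, (T x)^2 ∂μ0 = ∫ y, y^2 ∂μ1 := by
    rw [← hTmap, integral_map hT.aemeasurable (by rw [hTmap]; exact hsq_meas)]
  have hTs2eq : ∫ x, (Tstar x)^2 ∂μ0 = ∫ y, y^2 ∂μ1 := by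
    rw [← hTsMap, integral_map hTsMeas.aemeasurable (by rw [hTsMap]; exact hsq_meas)]
  -- Fubini representations
  obtain ⟨hKT_int, hKT_eq⟩ := otFubini μ0 T hT hμ0 hT2
  obtain ⟨hKTs_int, hKTs_eq⟩ := otFubini μ0 Tstar hTsMeas hμ0 hTs2
  -- pointwise comparison of K kernels
  have hpt : ∀ p : ℝ × ℝ, otK μ0 T p ≤ otK μ0 Tstar p := by
    intro p
    rw [otK_eval μ0 T hT p, otK_eval μ0 Tstar hTsMeas p]
    have hBeq : μ0 (T ⁻¹' Set.Ioi p.2) = μ0 (Tstar ⁻¹' Set.Ioi p.2) := by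
      rw [← Measure.map_apply hT measurableSet_Ioi, ← Measure.map_apply hTsMeas measurableSet_Ioi,
        hTmap, hTsMap]
    have hmin := otTstar_min μ0 μ1 p.1 p.2
    rw [← hTsFun] at hmin
    have hH : μ0 (Set.Ioi p.1 ∩ T ⁻¹' Set.Ioi p.2) ≤ μ0 (Set.Ioi p.1 ∩ Tstar ⁻¹' Set.Ioi p.2) := by
      rw [hmin]
      exact le_min (measure_mono Set.inter_subset_left)
        (hBeq ▸ measure_mono Set.inter_subset_right)
    have hHr : (μ0 (Set.Ioi p.1 ∩ T ⁻¹' Set.Ioi p.2)).toReal ≤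
        (μ0 (Set.Ioi p.1 ∩ Tstar ⁻¹' Set.Ioi p.2)).toReal :=
      ENNReal.toReal_le_toReal (measure_ne_top μ0 _) (measure_ne_top μ0 _) |>.mpr hH
    rw [hBeq]
    linarith
  have hmono : ∫ p, otK μ0 T p ∂((volume : Measure ℝ).prod (volume : Measure ℝ)) ≤
      ∫ p, otK μ0 Tstar p ∂((volume : Measure ℝ).prod (volume : Measure ℝ)) :=
    integral_mono hKT_int hKTs_int hpt
  have hcorr : ∫ x, x * T x ∂μ0 ≤ ∫ x, x * Tstar x ∂μ0 := by
    rw [hKT_eq, hKTs_eq]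
    exact hmono
  -- expand the squares
  have hxT : Integrable (fun x => x * T x) μ0 := ot_mul_integrable μ0 T hT hμ0 hT2
  have hxTs : Integrable (fun x => x * Tstar x) μ0 := ot_mul_integrable μ0 Tstar hTsMeas hμ0 hTs2
  have hexpand : ∀ (R : ℝ → ℝ), Integrable (fun x => (R x)^2) μ0 →
      Integrable (fun x => x * R x) μ0 →
      ∫ x, (x - R x) ^ 2 ∂μ0 = ∫ x, x^2 ∂μ0 - 2 * ∫ x, x * R x ∂μ0 + ∫ x, (R x)^2 ∂μ0 := by
    intro R hR2 hxR
    have he : (fun x => (x - R x) ^ 2) = fun x => x^2 - 2 * (x * R x) + (R x)^2 := by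
      funext x; ring
    have i2 : Integrable (fun x => 2 * (x * R x)) μ0 := hxR.const_mul 2
    have i12 : Integrable (fun x => x^2 - 2 * (x * R x)) μ0 := hμ0.sub i2
    rw [he, integral_add i12 hR2, integral_sub hμ0 i2, integral_const_mul]
  rw [hexpand T hT2 hxT, hexpand Tstar hTs2 hxTs, hT2eq, hTs2eq]
  linarith
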